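/- Correctness of BFV relinearization (version 2): let q, p ≥ 2 be integers and work in ℚ[x]/(xⁿ+1). Let s, h₀, h₁, h₂, a, e, r_{pq} ∈ ℤ[x]/(xⁿ+1) and set b = −(a·s + e) + p·s² + p·q·r_{pq}. Define h₀' = h₀ + ⌊(h₂·b)/p⌉ and h₁' = h₁ + ⌊(h₂·a)/p⌉, where ⌊·⌉ rounds each coefficient to the nearest integer. Then the exact identity h₀' + h₁'·s = h₀ + h₁·s + h₂·s² + q·h₂·r_{pq} + err₂ holds in ℚ[x]/(xⁿ+1), where err₂ = −(h₂·e)/p + (⌊(h₂·b)/p⌉ − (h₂·b)/p) + (⌊(h₂·a)/p⌉ − (h₂·a)/p)·s; in particular h₀' + h₁'·s − (h₀ + h₁·s + h₂·s²) − err₂ is divisible by q. -/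

import Mathlib

open Polynomial

/-- Coefficientwise rounding to the nearest integer, `⌊·⌉`. -/
noncomputable def roundPoly (f : Polynomial ℚ) : Polynomial ℚ :=
  f.sum fun i a => Polynomial.C ((round a : ℤ) : ℚ) * Polynomial.X ^ i

/-- The inclusion `ℤ[x] → ℚ[x]`. -/
noncomputable def toQ : Polynomial ℤ →+* Polynomial ℚ :=
  Polynomial.mapRingHom (Int.castRingHom ℚ)

/-- Correctness of BFV relinearization (version 2), as an exact identity in
`ℚ[x]/(xⁿ+1)` (formalized as a congruence of rational polynomials modulo `xⁿ+1`):
with relinearization key `b = -(a·s + e) + p·s² + p·q·r_{pq}` (an identity in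
`ℤ[x]/(xⁿ+1)`), `h₀' = h₀ + ⌊(h₂·b)/p⌉` and `h₁' = h₁ + ⌊(h₂·a)/p⌉` (products
reduced modulo `xⁿ+1`, rounding coefficientwise), we have
`h₀' + h₁'·s = h₀ + h₁·s + h₂·s² + q·h₂·r_{pq} + err₂`, where
`err₂ = -(h₂·e)/p + (⌊(h₂·b)/p⌉ - (h₂·b)/p) + (⌊(h₂·a)/p⌉ - (h₂·a)/p)·s`. -/
theorem bfv_relinearization_v2_correct (n : ℕ) (hn : 1 ≤ n) (q p : ℕ)
    (hq : 2 ≤ q) (hp : 2 ≤ p)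
    (s h₀ h₁ h₂ a e rpq b : Polynomial ℤ)
    (hb : ((X : Polynomial ℤ) ^ n + 1) ∣
      (b - (-(a * s + e) + Polynomial.C (p : ℤ) * s ^ 2
        + Polynomial.C ((p : ℤ) * (q : ℤ)) * rpq)))
    (Hb Ha : Polynomial ℚ)
    (hHb : Hb = Polynomial.C ((1 : ℚ) / (p : ℚ)) *
      ((toQ h₂ * toQ b) %ₘ ((X : Polynomial ℚ) ^ n + 1)))
    (hHa : Ha = Polynomial.C ((1 : ℚ) / (p : ℚ)) *
      ((toQ h₂ * toQ a) %ₘ ((X : Polynomial ℚ) ^ n + 1)))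
    (h₀' h₁' err₂ : Polynomial ℚ)
    (hh₀' : h₀' = toQ h₀ + roundPoly Hb)
    (hh₁' : h₁' = toQ h₁ + roundPoly Ha)
    (herr : err₂ = -(Polynomial.C ((1 : ℚ) / (p : ℚ)) * (toQ h₂ * toQ e))
      + (roundPoly Hb - Hb) + (roundPoly Ha - Ha) * toQ s) :
    ((X : Polynomial ℚ) ^ n + 1) ∣
      (h₀' + h₁' * toQ s
        - (toQ h₀ + toQ h₁ * toQ s + toQ h₂ * toQ s ^ 2
          + Polynomial.C (q : ℚ) * (toQ h₂ * toQ rpq) + err₂)) := by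

  subst hh₀' hh₁' herr
  set D : Polynomial ℚ := (X : Polynomial ℚ) ^ n + 1 with hD
  have hp0 : (p : ℚ) ≠ 0 := by positivity
  have hmonic : D.Monic := by
    have := Polynomial.monic_X_pow_add_C (R := ℚ) (1 : ℚ) (by omega : n ≠ 0)
    simpa [hD] using this
  have key : ∀ f : Polynomial ℚ, D ∣ f %ₘ D - f := fun f => by
    rw [Polynomial.modByMonic_eq_sub_mul_div f D]
    exact ⟨-(f /ₘ D), by ring⟩
  have hb' : D ∣ (toQ b - (-(toQ a * toQ s + toQ e) + Polynomial.C ((p : ℚ)) * toQ s ^ 2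
      + Polynomial.C ((p : ℚ) * (q : ℚ)) * toQ rpq)) := by
    have := map_dvd toQ hb
    simp only [toQ, map_sub, map_add, map_neg, map_mul, map_pow, map_one,
      Polynomial.map_pow, Polynomial.map_add, Polynomial.map_one, Polynomial.map_X,
      Polynomial.coe_mapRingHom, Polynomial.map_C] at this ⊢
    simpa [Polynomial.map_C] using this
  have h1 : D ∣ Hb - Polynomial.C ((1:ℚ)/(p:ℚ)) * (toQ h₂ * toQ b) := by
    rw [hHb]
    have := (key (toQ h₂ * toQ b)).mul_left (Polynomial.C ((1:ℚ)/(p:ℚ)))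
    convert this using 1
    ring
  have h2 : D ∣ Ha - Polynomial.C ((1:ℚ)/(p:ℚ)) * (toQ h₂ * toQ a) := by
    rw [hHa]
    have := (key (toQ h₂ * toQ a)).mul_left (Polynomial.C ((1:ℚ)/(p:ℚ)))
    convert this using 1
    ring
  have h3 : D ∣ Polynomial.C ((1:ℚ)/(p:ℚ)) * toQ h₂ *
      (toQ b - (-(toQ a * toQ s + toQ e) + Polynomial.C ((p : ℚ)) * toQ s ^ 2
        + Polynomial.C ((p : ℚ) * (q : ℚ)) * toQ rpq)) :=
    hb'.mul_left _
  have total := dvd_add (dvd_add h1 (h2.mul_right (toQ s))) h3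
  convert total using 1
  have hcp : Polynomial.C ((1:ℚ)/(p:ℚ)) * Polynomial.C ((p:ℚ)) = 1 := by
    rw [← Polynomial.C_mul]; field_simp; exact Polynomial.C_1
  have hcpq : Polynomial.C ((1:ℚ)/(p:ℚ)) * Polynomial.C ((p:ℚ) * (q:ℚ)) =
      Polynomial.C ((q:ℚ)) := by
    rw [← Polynomial.C_mul]; congr 1; field_simp
  ring_nf
  ring_nf at hcp hcpq
  linear_combination (toQ h₂ * toQ s ^ 2) * hcp + (toQ h₂ * toQ rpq) * hcpq
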